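/- arXiv:2507.15632 — 2 statements merged into one kernel-verified Lean document; each statement's English description precedes it below -/
import Mathlib

section
/- Let m, n ≥ 1 be integers with m dividing n. Let μ be an exchangeable probability measure on (Fin n → ℝ) with ∫ ‖x‖₁ dμ(x) < ∞, and let q : (Fin m → ℝ) → ℝ be Lipschitz with constant L with respect to the ℓ1 norm on Fin m → ℝ. Then | m^(−n) · ∑_{f : Fin n → Fin m} ∫ q(T_f x) dμ(x) − ∫ q(T_{d_{m,n}} x) dμ(x) | ≤ 2L · √( m²(m−1)/n ) · ∫ ‖x‖₁ dμ(x). -/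
set_option linter.unusedSectionVars false
set_option maxHeartbeats 1000000
open MeasureTheory Finset

noncomputable def binOp {n m : ℕ} (f : Fin n → Fin m) (x : Fin n → ℝ) : Fin m → ℝ :=
  fun i => ∑ j ∈ Finset.univ.filter (fun j => f j = i), x j

lemma binOp_ite {n m : ℕ} (f : Fin n → Fin m) (x : Fin n → ℝ) (i : Fin m) :
    binOp f x i = ∑ j, if f j = i then x j else 0 := by
  rw [binOp, Finset.sum_filter]

lemma binOp_comp_perm {n m : ℕ} (f : Fin n → Fin m) (σ : Equiv.Perm (Fin n)) (x : Fin n → ℝ) :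
    binOp (f ∘ ⇑σ) x = binOp f (x ∘ ⇑σ.symm) := by
  funext i
  rw [binOp_ite, binOp_ite]
  rw [← Equiv.sum_comp σ (fun k => if f k = i then (x ∘ ⇑σ.symm) k else 0)]
  simp [Function.comp]

lemma binOp_abs_le {n m : ℕ} (f : Fin n → Fin m) (x : Fin n → ℝ) :
    ∑ i, |binOp f x i| ≤ ∑ j, |x j| := by
  calc ∑ i, |binOp f x i| ≤ ∑ i, ∑ j ∈ Finset.univ.filter (fun j => f j = i), |x j| := by
        refine Finset.sum_le_sum fun i _ => ?_
        exact Finset.abs_sum_le_sum_abs _ _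
    _ = ∑ j, |x j| := Finset.sum_fiberwise _ _ _

lemma binOp_continuous {n m : ℕ} (f : Fin n → Fin m) : Continuous (binOp f) := by
  refine continuous_pi fun i => ?_
  exact continuous_finset_sum _ fun j _ => continuous_apply j

section
variable {n m : ℕ}

lemma q_cont {L : ℝ} {q : (Fin m → ℝ) → ℝ} (hL : 0 ≤ L)
    (hq : ∀ y z : Fin m → ℝ, |q y - q z| ≤ L * ∑ i, |y i - z i|) :
    Continuous q := by
  refine (LipschitzWith.of_dist_le_mul (K := ⟨L * m, by positivity⟩) fun y z => ?_).continuous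
  have h1 : ∑ i, |y i - z i| ≤ ∑ i : Fin m, dist y z := by
    refine Finset.sum_le_sum fun i _ => ?_
    have := dist_le_pi_dist y z i
    simpa [Real.dist_eq] using this
  have h2 := hq y z
  simp only [Finset.sum_const, Finset.card_univ, Fintype.card_fin, nsmul_eq_mul] at h1
  rw [Real.dist_eq]
  calc |q y - q z| ≤ L * ∑ i, |y i - z i| := h2
    _ ≤ L * (m * dist y z) := by nlinarith [dist_nonneg (x := y) (y := z)]
    _ = (L * m) * dist y z := by ring

lemma abs_q_le {L : ℝ} {q : (Fin m → ℝ) → ℝ} (hL : 0 ≤ L)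
    (hq : ∀ y z : Fin m → ℝ, |q y - q z| ≤ L * ∑ i, |y i - z i|)
    (f : Fin n → Fin m) (x : Fin n → ℝ) :
    |q (binOp f x)| ≤ |q 0| + L * ∑ j, |x j| := by
  have h := hq (binOp f x) 0
  simp only [Pi.zero_apply, sub_zero] at h
  have h3 := binOp_abs_le f x
  have h4 : |q (binOp f x)| ≤ |q (binOp f x) - q 0| + |q 0| := by
    have := abs_sub_abs_le_abs_sub (q (binOp f x)) (q 0)
    have := abs_add_le (q (binOp f x) - q 0) (q 0)
    simp only [sub_add_cancel] at this
    linarith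
  nlinarith

variable (μ : Measure (Fin n → ℝ)) [IsProbabilityMeasure μ]
variable (hexch : ∀ σ : Equiv.Perm (Fin n), μ.map (fun x => x ∘ ⇑σ) = μ)
variable (hint : Integrable (fun x : Fin n → ℝ => ∑ j, |x j|) μ)
include hint in
lemma q_integrable {L : ℝ} {q : (Fin m → ℝ) → ℝ} (hL : 0 ≤ L)
    (hq : ∀ y z : Fin m → ℝ, |q y - q z| ≤ L * ∑ i, |y i - z i|)
    (f : Fin n → Fin m) :
    Integrable (fun x => q (binOp f x)) μ := by
  have hcont : Continuous fun x => q (binOp f x) :=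
    (q_cont hL hq).comp (binOp_continuous f)
  refine Integrable.mono' (g := fun x => |q 0| + L * ∑ j, |x j|)
    ((integrable_const (|q 0|)).add (hint.const_mul L)) hcont.aestronglyMeasurable ?_
  filter_upwards with x
  simpa using abs_q_le hL hq f x

omit [IsProbabilityMeasure μ] in
include hexch in
lemma integral_comp_perm (σ : Equiv.Perm (Fin n)) {h : (Fin n → ℝ) → ℝ}
    (hmeas : AEStronglyMeasurable h μ) :
    ∫ x, h (x ∘ ⇑σ) ∂μ = ∫ x, h x ∂μ := by
  conv_rhs => rw [← hexch σ]
  rw [integral_map]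
  · exact (measurable_pi_lambda _ fun i => measurable_pi_apply (σ i)).aemeasurable
  · rw [hexch σ]; exact hmeas

include hexch in
lemma integral_q_comp_perm {L : ℝ} {q : (Fin m → ℝ) → ℝ} (hL : 0 ≤ L)
    (hq : ∀ y z : Fin m → ℝ, |q y - q z| ≤ L * ∑ i, |y i - z i|)
    (f : Fin n → Fin m) (σ : Equiv.Perm (Fin n)) :
    ∫ x, q (binOp (f ∘ ⇑σ) x) ∂μ = ∫ x, q (binOp f x) ∂μ := by
  have hcont : Continuous fun x => q (binOp f x) :=
    (q_cont hL hq).comp (binOp_continuous f)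
  calc ∫ x, q (binOp (f ∘ ⇑σ) x) ∂μ = ∫ x, q (binOp f (x ∘ ⇑σ.symm)) ∂μ := by
        simp_rw [binOp_comp_perm]
    _ = ∫ x, q (binOp f x) ∂μ :=
        integral_comp_perm μ hexch σ.symm hcont.aestronglyMeasurable

include hint in
lemma integrable_coord (j : Fin n) : Integrable (fun x : Fin n → ℝ => |x j|) μ := by
  refine Integrable.mono' hint ?_ ?_
  · exact ((continuous_apply j).abs).aestronglyMeasurable
  · filter_upwards with x
    rw [Real.norm_eq_abs, abs_abs]
    exact Finset.single_le_sum (f := fun k => |x k|) (fun k _ => abs_nonneg _) (Finset.mem_univ j)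

include hexch in
lemma integral_coord_eq (j k : Fin n) :
    ∫ x, |x j| ∂μ = ∫ x, |x k| ∂μ := by
  have := integral_comp_perm μ hexch (Equiv.swap j k)
    (h := fun x => |x k|) ((continuous_apply k).abs).aestronglyMeasurable
  simpa [Function.comp, Equiv.swap_apply_right] using this

include hexch hint in
lemma integral_sum_coords (j0 : Fin n) :
    ∫ x, (∑ j, |x j|) ∂μ = n * ∫ x, |x j0| ∂μ := by
  rw [integral_finset_sum _ (fun j _ => integrable_coord μ hint j)]
  have : ∀ j, ∫ x, |x j| ∂μ = ∫ x, |x j0| ∂μ := fun j => integral_coord_eq μ hexch j j0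
  simp_rw [this]
  simp [Finset.card_univ]
end
lemma binOp_dist {n m : ℕ} (f g : Fin n → Fin m) (x : Fin n → ℝ) :
    ∑ i, |binOp f x i - binOp g x i|
      ≤ 2 * ∑ j ∈ Finset.univ.filter (fun j => f j ≠ g j), |x j| := by
  have key : ∀ i, |binOp f x i - binOp g x i|
      ≤ ∑ j, (if f j ≠ g j then ((if f j = i then |x j| else 0) + (if g j = i then |x j| else 0)) else 0) := by
    intro i
    rw [binOp_ite, binOp_ite, ← Finset.sum_sub_distrib]
    refine (Finset.abs_sum_le_sum_abs _ _).trans (Finset.sum_le_sum fun j _ => ?_)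
    by_cases hj : f j = g j
    · simp [hj]
    · simp only [hj, if_true, ne_eq, not_false_iff]
      refine (abs_sub _ _).trans ?_
      gcongr <;> [skip; skip] <;> split <;> simp
  calc ∑ i, |binOp f x i - binOp g x i|
      ≤ ∑ i, ∑ j, (if f j ≠ g j then ((if f j = i then |x j| else 0) + (if g j = i then |x j| else 0)) else 0) :=
        Finset.sum_le_sum fun i _ => key i
    _ = ∑ j, ∑ i, (if f j ≠ g j then ((if f j = i then |x j| else 0) + (if g j = i then |x j| else 0)) else 0) :=
        Finset.sum_comm
    _ = ∑ j, (if f j ≠ g j then 2 * |x j| else 0) := by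
        refine Finset.sum_congr rfl fun j _ => ?_
        by_cases hj : f j = g j
        · simp [hj]
        · simp only [hj, ne_eq, not_false_iff, if_true]
          rw [Finset.sum_add_distrib, Finset.sum_ite_eq, Finset.sum_ite_eq]
          simp; ring
    _ = 2 * ∑ j ∈ Finset.univ.filter (fun j => f j ≠ g j), |x j| := by
        rw [Finset.sum_filter, Finset.mul_sum]
        refine Finset.sum_congr rfl fun j _ => ?_
        split <;> simp

section
variable {n m : ℕ} (μ : Measure (Fin n → ℝ)) [IsProbabilityMeasure μ]
variable (hexch : ∀ σ : Equiv.Perm (Fin n), μ.map (fun x => x ∘ ⇑σ) = μ)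
variable (hint : Integrable (fun x : Fin n → ℝ => ∑ j, |x j|) μ)

include hexch hint in
lemma integral_pair_bound {L : ℝ} {q : (Fin m → ℝ) → ℝ} (hL : 0 ≤ L)
    (hq : ∀ y z : Fin m → ℝ, |q y - q z| ≤ L * ∑ i, |y i - z i|)
    (f g : Fin n → Fin m) (j0 : Fin n) :
    |(∫ x, q (binOp f x) ∂μ) - ∫ x, q (binOp g x) ∂μ|
      ≤ 2 * L * ((Finset.univ.filter (fun j => f j ≠ g j)).card : ℝ) * ∫ x, |x j0| ∂μ := by
  set D := Finset.univ.filter (fun j => f j ≠ g j) with hD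
  have hif := q_integrable μ hint hL hq f
  have hig := q_integrable μ hint hL hq g
  have hiD : Integrable (fun x : Fin n → ℝ => ∑ j ∈ D, |x j|) μ :=
    integrable_finset_sum _ (fun j _ => integrable_coord μ hint j)
  have step1 : |(∫ x, q (binOp f x) ∂μ) - ∫ x, q (binOp g x) ∂μ|
      ≤ ∫ x, |q (binOp f x) - q (binOp g x)| ∂μ := by
    rw [← integral_sub hif hig]
    simpa [Real.norm_eq_abs] using norm_integral_le_integral_norm (μ := μ) (fun x => q (binOp f x) - q (binOp g x))
  have step2 : ∫ x, |q (binOp f x) - q (binOp g x)| ∂μ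
      ≤ ∫ x, (2 * L) * ∑ j ∈ D, |x j| ∂μ := by
    refine integral_mono (hif.sub hig).abs (hiD.const_mul _) fun x => ?_
    calc |q (binOp f x) - q (binOp g x)| ≤ L * ∑ i, |binOp f x i - binOp g x i| := hq _ _
      _ ≤ L * (2 * ∑ j ∈ D, |x j|) := by
          have := binOp_dist f g x
          nlinarith
      _ = (2 * L) * ∑ j ∈ D, |x j| := by ring
  have step3 : ∫ x, (2 * L) * ∑ j ∈ D, |x j| ∂μ
      = 2 * L * (D.card : ℝ) * ∫ x, |x j0| ∂μ := by
    rw [integral_const_mul, integral_finset_sum _ (fun j _ => integrable_coord μ hint j)]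
    have : ∀ j, ∫ x, |x j| ∂μ = ∫ x, |x j0| ∂μ := fun j => integral_coord_eq μ hexch j j0
    simp_rw [this]
    rw [Finset.sum_const, nsmul_eq_mul]
    ring
  linarith
end


section comb
variable {n m : ℕ}

/-- number of `j` with `h j = i` -/
def cnt (h : Fin n → Fin m) (i : Fin m) : ℕ := (univ.filter fun j => h j = i).card
/-- number of `j` with `h j ≤ i` -/
def cntLe (h : Fin n → Fin m) (i : Fin m) : ℕ := (univ.filter fun j => h j ≤ i).card

lemma lowerSet_mem_iff {S : Finset (Fin n)} (hS : ∀ a b : Fin n, a ≤ b → b ∈ S → a ∈ S)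
    (j : Fin n) : j ∈ S ↔ (j : ℕ) < S.card := by
  constructor
  · intro hj
    have hsub : Finset.Iic j ⊆ S := fun a ha => hS a j (Finset.mem_Iic.mp ha) hj
    have := Finset.card_le_card hsub
    rw [Fin.card_Iic] at this; omega
  · intro hlt
    by_contra hj
    have hsub : S ⊆ Finset.Iio j := by
      intro b hb
      rw [Finset.mem_Iio]
      by_contra hbj
      push_neg at hbj
      exact hj (hS j b hbj hb)
    have := Finset.card_le_card hsub
    rw [Fin.card_Iio] at this; omega

lemma mono_le_iff {g : Fin n → Fin m} (hg : Monotone g) (i : Fin m) (j : Fin n) :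
    g j ≤ i ↔ (j : ℕ) < cntLe g i := by
  have := lowerSet_mem_iff (S := univ.filter fun j => g j ≤ i)
    (fun a b hab hb => by
      simp only [Finset.mem_filter, Finset.mem_univ, true_and] at *
      exact le_trans (hg hab) hb) j
  simpa [cntLe, Finset.mem_filter] using this

lemma card_filter_val_eq {P : ℕ → Prop} [DecidablePred P] :
    (univ.filter fun j : Fin n => P (j : ℕ)).card = ((Finset.range n).filter P).card := by
  refine Finset.card_bij (fun j _ => (j : ℕ)) ?_ ?_ ?_
  · intro j hj
    simp only [Finset.mem_filter, Finset.mem_univ, true_and] at hj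
    simp [hj, j.isLt]
  · intro a ha b hb hab
    exact Fin.val_injective hab
  · intro a ha
    simp only [Finset.mem_filter, Finset.mem_range] at ha
    exact ⟨⟨a, ha.1⟩, by simp [ha.2], rfl⟩

lemma card_xor_aux {a a' : ℕ} (h : a ≤ a') (ha' : a' ≤ n) :
    (univ.filter fun j : Fin n => ¬(((j : ℕ) < a) ↔ ((j : ℕ) < a'))).card = a' - a := by
  rw [card_filter_val_eq (P := fun t => ¬(t < a ↔ t < a'))]
  have : (Finset.range n).filter (fun j => ¬((j < a) ↔ (j < a'))) = Finset.Ico a a' := by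
    ext j
    simp only [Finset.mem_filter, Finset.mem_range, Finset.mem_Ico]
    constructor
    · intro ⟨h1, h2⟩; omega
    · intro ⟨h1, h2⟩; exact ⟨by omega, by omega⟩
  rw [this, Nat.card_Ico]

lemma card_xor {a a' : ℕ} (ha : a ≤ n) (ha' : a' ≤ n) :
    ((univ.filter fun j : Fin n => ¬(((j : ℕ) < a) ↔ ((j : ℕ) < a'))).card : ℤ)
      = |(a : ℤ) - (a' : ℤ)| := by
  rcases le_total a a' with h | h
  · rw [card_xor_aux h ha', abs_of_nonpos (by push_cast; omega)]; push_cast [h]; omega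
  · have : (univ.filter fun j : Fin n => ¬(((j : ℕ) < a) ↔ ((j : ℕ) < a')))
        = univ.filter fun j : Fin n => ¬(((j : ℕ) < a') ↔ ((j : ℕ) < a)) := by
      ext j; simp only [Finset.mem_filter]; constructor <;> intro ⟨h1, h2⟩ <;> exact ⟨h1, by tauto⟩
    rw [this, card_xor_aux h ha, abs_of_nonneg (by push_cast; omega)]; push_cast [h]; omega

lemma disagree_le_sum_xor {g d : Fin n → Fin m} :
    (univ.filter fun j => g j ≠ d j).card
      ≤ ∑ i : Fin m, (univ.filter fun j : Fin n => ¬(g j ≤ i ↔ d j ≤ i)).card := by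
  simp only [Finset.card_filter]
  rw [Finset.sum_comm]
  refine Finset.sum_le_sum fun j _ => ?_
  by_cases hj : g j = d j
  · simp [hj]
  · simp only [hj, ne_eq, not_false_iff, if_true]
    rcases lt_or_gt_of_ne hj with hlt | hlt
    · calc (1 : ℕ) = if ¬(g j ≤ g j ↔ d j ≤ g j) then 1 else 0 := by
            have hc : ¬(g j ≤ g j ↔ d j ≤ g j) := by simp [hlt.not_ge]
            rw [if_pos hc]
        _ ≤ ∑ i : Fin m, if ¬(g j ≤ i ↔ d j ≤ i) then 1 else 0 :=
            Finset.single_le_sum (f := fun i => if ¬(g j ≤ i ↔ d j ≤ i) then (1:ℕ) else 0)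
              (fun i _ => by positivity) (Finset.mem_univ (g j))
    · calc (1 : ℕ) = if ¬(g j ≤ d j ↔ d j ≤ d j) then 1 else 0 := by
            have hc : ¬(g j ≤ d j ↔ d j ≤ d j) := by simp [hlt.not_ge]
            rw [if_pos hc]
        _ ≤ ∑ i : Fin m, if ¬(g j ≤ i ↔ d j ≤ i) then 1 else 0 :=
            Finset.single_le_sum (f := fun i => if ¬(g j ≤ i ↔ d j ≤ i) then (1:ℕ) else 0)
              (fun i _ => by positivity) (Finset.mem_univ (d j))

lemma xor_card_eq {g d : Fin n → Fin m} (hg : Monotone g) (hd : Monotone d) (i : Fin m) :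
    ((univ.filter fun j : Fin n => ¬(g j ≤ i ↔ d j ≤ i)).card : ℤ)
      = |(cntLe g i : ℤ) - (cntLe d i : ℤ)| := by
  have h1 : (univ.filter fun j : Fin n => ¬(g j ≤ i ↔ d j ≤ i))
      = univ.filter fun j : Fin n => ¬(((j : ℕ) < cntLe g i) ↔ ((j : ℕ) < cntLe d i)) := by
    ext j
    simp only [Finset.mem_filter, mono_le_iff hg i j, mono_le_iff hd i j]
  rw [h1]
  exact card_xor (Finset.card_filter_le _ _ |>.trans (by simp))
    (Finset.card_filter_le _ _ |>.trans (by simp))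

lemma cntLe_eq_sum {h : Fin n → Fin m} (i : Fin m) :
    cntLe h i = ∑ k ∈ Finset.Iic i, cnt h k := by
  unfold cntLe cnt
  simp only [Finset.card_filter]
  rw [Finset.sum_comm]
  refine Finset.sum_congr rfl fun j _ => ?_
  rw [Finset.sum_ite_eq]
  simp [Finset.mem_Iic]

lemma mono_disagree_bound {g d : Fin n → Fin m} (hg : Monotone g) (hd : Monotone d) :
    ((univ.filter fun j => g j ≠ d j).card : ℤ)
      ≤ (m : ℤ) * ∑ k : Fin m, |(cnt g k : ℤ) - (cnt d k : ℤ)| := by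
  have step1 : ((univ.filter fun j => g j ≠ d j).card : ℤ)
      ≤ ∑ i : Fin m, |(cntLe g i : ℤ) - (cntLe d i : ℤ)| := by
    calc ((univ.filter fun j => g j ≠ d j).card : ℤ)
        ≤ ((∑ i : Fin m, (univ.filter fun j : Fin n => ¬(g j ≤ i ↔ d j ≤ i)).card : ℕ) : ℤ) := by
          exact_mod_cast disagree_le_sum_xor
      _ = ∑ i : Fin m, |(cntLe g i : ℤ) - (cntLe d i : ℤ)| := by
          push_cast
          exact Finset.sum_congr rfl fun i _ => xor_card_eq hg hd i
  refine step1.trans ?_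
  have step2 : ∀ i : Fin m, |(cntLe g i : ℤ) - (cntLe d i : ℤ)|
      ≤ ∑ k : Fin m, |(cnt g k : ℤ) - (cnt d k : ℤ)| := by
    intro i
    rw [cntLe_eq_sum, cntLe_eq_sum]
    push_cast
    rw [← Finset.sum_sub_distrib]
    refine (Finset.abs_sum_le_sum_abs _ _).trans ?_
    exact Finset.sum_le_sum_of_subset_of_nonneg (Finset.subset_univ _)
      (fun k _ _ => abs_nonneg _)
  calc ∑ i : Fin m, |(cntLe g i : ℤ) - (cntLe d i : ℤ)|
      ≤ ∑ _i : Fin m, ∑ k : Fin m, |(cnt g k : ℤ) - (cnt d k : ℤ)| :=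
        Finset.sum_le_sum fun i _ => step2 i
    _ = (m : ℤ) * ∑ k : Fin m, |(cnt g k : ℤ) - (cnt d k : ℤ)| := by
        rw [Finset.sum_const, Finset.card_univ, Fintype.card_fin, nsmul_eq_mul]
end comb


/-- For `m ∣ n`, the standard equipartition `d_{m,n} : Fin n → Fin m`. -/
def dmap (m n : ℕ) (hn : 0 < n) (hdvd : m ∣ n) : Fin n → Fin m :=
  fun x => ⟨(x : ℕ) / (n / m), by
    have hm : 0 < m := Nat.pos_of_dvd_of_pos hdvd hn
    have hb : 0 < n / m := Nat.div_pos (Nat.le_of_dvd hn hdvd) hm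
    refine (Nat.div_lt_iff_lt_mul hb).mpr ?_
    have hnm : m * (n / m) = n := Nat.mul_div_cancel' hdvd
    have := x.isLt
    omega⟩



section
variable {m n : ℕ} (hn : 0 < n) (hdvd : m ∣ n)

lemma dmap_monotone : Monotone (dmap m n hn hdvd) := by
  intro a b hab
  simp only [dmap, Fin.mk_le_mk]
  exact Nat.div_le_div_right (Fin.le_def.mp hab)

lemma cnt_dmap (k : Fin m) : cnt (dmap m n hn hdvd) k = n / m := by
  have hm : 0 < m := Nat.pos_of_dvd_of_pos hdvd hn
  have hb : 0 < n / m := Nat.div_pos (Nat.le_of_dvd hn hdvd) hm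
  have hnm : m * (n / m) = n := Nat.mul_div_cancel' hdvd
  unfold cnt
  have hcond : ∀ j : Fin n, (dmap m n hn hdvd j = k) ↔ ((j : ℕ) / (n / m) = (k : ℕ)) := by
    intro j
    rw [Fin.ext_iff]; rfl
  simp only [hcond]
  rw [card_filter_val_eq (P := fun t => t / (n / m) = (k : ℕ))]
  have heq : (Finset.range n).filter (fun t => t / (n / m) = (k : ℕ))
      = Finset.Ico ((k : ℕ) * (n / m)) (((k : ℕ) + 1) * (n / m)) := by
    ext t
    simp only [Finset.mem_filter, Finset.mem_range, Finset.mem_Ico]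
    constructor
    · rintro ⟨ht, hdiv⟩
      constructor
      · calc (k : ℕ) * (n / m) = t / (n / m) * (n / m) := by rw [hdiv]
          _ ≤ t := Nat.div_mul_le_self t (n / m)
      · have : t / (n / m) < (k : ℕ) + 1 := by omega
        exact (Nat.div_lt_iff_lt_mul hb).mp this
    · rintro ⟨h1, h2⟩
      have hk1 : t / (n / m) < (k : ℕ) + 1 := (Nat.div_lt_iff_lt_mul hb).mpr h2
      have hk2 : (k : ℕ) ≤ t / (n / m) := (Nat.le_div_iff_mul_le hb).mpr h1
      have hkm : (k : ℕ) < m := k.isLt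
      constructor
      · calc t < ((k : ℕ) + 1) * (n / m) := h2
          _ ≤ m * (n / m) := Nat.mul_le_mul_right _ (by omega)
          _ = n := hnm
      · omega
  rw [heq, Nat.card_Ico]
  have hkm : (k : ℕ) < m := k.isLt
  have : ((k : ℕ) + 1) * (n / m) = (k : ℕ) * (n / m) + n / m := by ring
  omega
end

lemma cnt_comp_perm {n m : ℕ} (f : Fin n → Fin m) (σ : Equiv.Perm (Fin n)) (i : Fin m) :
    cnt (f ∘ ⇑σ) i = cnt f i := by
  unfold cnt
  simp only [Finset.card_filter]
  exact Equiv.sum_comp σ (fun k => if f k = i then 1 else 0)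



section cnting
variable {n m : ℕ}

lemma sum_prod_ind (s : Finset (Fin n)) (i : Fin m) :
    ∑ f : Fin n → Fin m, ∏ j ∈ s, (if f j = i then (1 : ℝ) else 0)
      = (m : ℝ) ^ (n - s.card) := by
  have key := Finset.prod_univ_sum (t := fun _ : Fin n => (univ : Finset (Fin m)))
    (f := fun j a => if j ∈ s then (if a = i then (1 : ℝ) else 0) else 1)
  rw [Fintype.piFinset_univ] at key
  have lhs_eq : ∏ j : Fin n, ∑ a : Fin m, (if j ∈ s then (if a = i then (1 : ℝ) else 0) else 1)
      = (m : ℝ) ^ (n - s.card) := by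
    have : ∀ j : Fin n, (∑ a : Fin m, (if j ∈ s then (if a = i then (1 : ℝ) else 0) else 1))
        = if j ∈ s then 1 else (m : ℝ) := by
      intro j
      by_cases hj : j ∈ s
      · simp only [hj, if_true]
        rw [Finset.sum_ite_eq']
        simp
      · simp [hj]
    simp_rw [this]
    rw [Finset.prod_ite]
    simp only [Finset.prod_const_one, one_mul, Finset.prod_const]
    congr 1
    rw [Finset.filter_not, Finset.filter_mem_eq_inter, Finset.univ_inter]
    rw [Finset.card_sdiff_of_subset (Finset.subset_univ s)]
    simp
  have rhs_eq : ∀ f : Fin n → Fin m,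
      (∏ j : Fin n, if j ∈ s then (if f j = i then (1 : ℝ) else 0) else 1)
        = ∏ j ∈ s, (if f j = i then (1 : ℝ) else 0) := by
    intro f
    rw [Finset.prod_ite_mem, Finset.univ_inter]
  rw [lhs_eq] at key
  rw [key]
  exact Finset.sum_congr rfl fun f _ => (rhs_eq f).symm

lemma sum_ind_single (j : Fin n) (i : Fin m) :
    ∑ f : Fin n → Fin m, (if f j = i then (1 : ℝ) else 0) = (m : ℝ) ^ (n - 1) := by
  have := sum_prod_ind {j} i
  simpa using this

lemma sum_ind_pair {j k : Fin n} (hjk : j ≠ k) (i : Fin m) :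
    ∑ f : Fin n → Fin m, (if f j = i then (1 : ℝ) else 0) * (if f k = i then (1 : ℝ) else 0)
      = (m : ℝ) ^ (n - 2) := by
  have := sum_prod_ind {j, k} i
  rw [Finset.card_pair hjk] at this
  rw [← this]
  exact Finset.sum_congr rfl fun f _ => (Finset.prod_pair hjk (f := fun l => if f l = i then (1:ℝ) else 0)).symm

lemma cnt_cast (f : Fin n → Fin m) (i : Fin m) :
    (cnt f i : ℝ) = ∑ j, (if f j = i then (1 : ℝ) else 0) := by
  unfold cnt
  rw [Finset.card_filter]
  push_cast
  rfl

lemma sum_cnt (i : Fin m) :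
    ∑ f : Fin n → Fin m, (cnt f i : ℝ) = n * (m : ℝ) ^ (n - 1) := by
  simp_rw [cnt_cast]
  rw [Finset.sum_comm]
  simp_rw [sum_ind_single]
  simp [Finset.card_univ, mul_comm]

lemma sum_cnt_sq (i : Fin m) :
    ∑ f : Fin n → Fin m, (cnt f i : ℝ) ^ 2
      = n * (m : ℝ) ^ (n - 1) + n * (n - 1) * (m : ℝ) ^ (n - 2) := by
  have expand : ∀ f : Fin n → Fin m, (cnt f i : ℝ) ^ 2
      = ∑ j : Fin n, ∑ k : Fin n,
          (if f j = i then (1 : ℝ) else 0) * (if f k = i then (1 : ℝ) else 0) := by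
    intro f
    rw [cnt_cast, sq, Finset.sum_mul_sum]
  simp_rw [expand]
  rw [Finset.sum_comm]
  have swap2 : ∀ j : Fin n,
      (∑ f : Fin n → Fin m, ∑ k : Fin n,
        (if f j = i then (1 : ℝ) else 0) * (if f k = i then (1 : ℝ) else 0))
      = ∑ k : Fin n, ∑ f : Fin n → Fin m,
        (if f j = i then (1 : ℝ) else 0) * (if f k = i then (1 : ℝ) else 0) :=
    fun j => Finset.sum_comm
  simp_rw [swap2]
  have inner : ∀ j : Fin n,
      (∑ k : Fin n, ∑ f : Fin n → Fin m,
        (if f j = i then (1 : ℝ) else 0) * (if f k = i then (1 : ℝ) else 0))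
      = (m : ℝ) ^ (n - 1) + (n - 1) * (m : ℝ) ^ (n - 2) := by
    intro j
    rw [← Finset.add_sum_erase _ _ (Finset.mem_univ j)]
    have hjj : (∑ f : Fin n → Fin m,
        (if f j = i then (1 : ℝ) else 0) * (if f j = i then (1 : ℝ) else 0))
        = (m : ℝ) ^ (n - 1) := by
      rw [← sum_ind_single j i]
      refine Finset.sum_congr rfl fun f _ => ?_
      by_cases hf : f j = i <;> simp [hf]
    rw [hjj]
    congr 1
    have : ∀ k ∈ Finset.univ.erase j, (∑ f : Fin n → Fin m,
        (if f j = i then (1 : ℝ) else 0) * (if f k = i then (1 : ℝ) else 0))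
        = (m : ℝ) ^ (n - 2) := by
      intro k hk
      exact sum_ind_pair (Ne.symm (Finset.mem_erase.mp hk).1) i
    rw [Finset.sum_congr rfl this, Finset.sum_const, Finset.card_erase_of_mem (Finset.mem_univ j)]
    simp only [Finset.card_univ, Fintype.card_fin, nsmul_eq_mul]
    have hj := j.isLt
    have : ((n - 1 : ℕ) : ℝ) = (n : ℝ) - 1 := by
      have hn : 1 ≤ n := by omega
      push_cast [hn]
      ring
    rw [this]
  simp_rw [inner]
  rw [Finset.sum_const]
  simp only [Finset.card_univ, Fintype.card_fin, nsmul_eq_mul]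
  ring


lemma sum_sq_dev (hm : 1 ≤ m) (hn : 1 ≤ n) (hdvd : m ∣ n) (i : Fin m) :
    ∑ f : Fin n → Fin m, ((cnt f i : ℝ) - (n : ℝ) / m) ^ 2
      = (m : ℝ) ^ n * ((n : ℝ) * ((m : ℝ) - 1) / (m : ℝ) ^ 2) := by
  have hcard : ((Finset.univ : Finset (Fin n → Fin m)).card : ℝ) = (m : ℝ) ^ n := by
    rw [Finset.card_univ, Fintype.card_fun]
    push_cast
    simp
  have h1 : ∀ f : Fin n → Fin m, ((cnt f i : ℝ) - (n : ℝ) / m) ^ 2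
      = (cnt f i : ℝ) ^ 2 - (2 * ((n : ℝ) / m)) * (cnt f i : ℝ) + ((n : ℝ) / m) ^ 2 :=
    fun f => by ring
  simp_rw [h1]
  rw [Finset.sum_add_distrib, Finset.sum_sub_distrib, ← Finset.mul_sum, sum_cnt, sum_cnt_sq,
    Finset.sum_const, nsmul_eq_mul, hcard]
  rcases eq_or_lt_of_le hm with hm1 | hm2
  · subst m
    norm_num
    ring
  · have hmn : m ≤ n := Nat.le_of_dvd (by omega) hdvd
    obtain ⟨n', rfl⟩ : ∃ n', n = n' + 2 := ⟨n - 2, by omega⟩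
    have e1 : n' + 2 - 1 = n' + 1 := by omega
    have e2 : n' + 2 - 2 = n' := by omega
    rw [e1, e2]
    have hm0 : (m : ℝ) ≠ 0 := by positivity
    have p1 : (m : ℝ) ^ (n' + 1) = (m : ℝ) ^ n' * m := by ring
    have p2 : (m : ℝ) ^ (n' + 2) = (m : ℝ) ^ n' * m * m := by ring
    rw [p1, p2]
    field_simp
    ring

lemma sum_abs_dev (hm : 1 ≤ m) (hn : 1 ≤ n) (hdvd : m ∣ n) (i : Fin m) :
    ∑ f : Fin n → Fin m, |(cnt f i : ℝ) - (n : ℝ) / m|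
      ≤ (m : ℝ) ^ n * Real.sqrt ((n : ℝ) * ((m : ℝ) - 1)) / m := by
  set S := ∑ f : Fin n → Fin m, |(cnt f i : ℝ) - (n : ℝ) / m| with hS
  have hS0 : 0 ≤ S := Finset.sum_nonneg fun f _ => abs_nonneg _
  set R := (m : ℝ) ^ n * Real.sqrt ((n : ℝ) * ((m : ℝ) - 1)) / m with hR
  have hR0 : 0 ≤ R := by positivity
  have ht0 : (0 : ℝ) ≤ (n : ℝ) * ((m : ℝ) - 1) := by
    have h1 : (1 : ℝ) ≤ (m : ℝ) := by exact_mod_cast hm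
    have h2 : (0 : ℝ) ≤ (n : ℝ) := Nat.cast_nonneg n
    nlinarith
  have hsq : S ^ 2 ≤ R ^ 2 := by
    have hcs := sq_sum_le_card_mul_sum_sq (s := (Finset.univ : Finset (Fin n → Fin m)))
      (f := fun f => |(cnt f i : ℝ) - (n : ℝ) / m|)
    have habs : ∑ f : Fin n → Fin m, |(cnt f i : ℝ) - (n : ℝ) / m| ^ 2
        = ∑ f : Fin n → Fin m, ((cnt f i : ℝ) - (n : ℝ) / m) ^ 2 :=
      Finset.sum_congr rfl fun f _ => sq_abs _
    rw [habs, sum_sq_dev hm hn hdvd i] at hcs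
    have hcard : ((Finset.univ : Finset (Fin n → Fin m)).card : ℝ) = (m : ℝ) ^ n := by
      rw [Finset.card_univ, Fintype.card_fun]; push_cast; simp
    rw [hcard] at hcs
    refine hcs.trans (le_of_eq ?_)
    rw [hR]
    rw [div_pow, mul_pow, Real.sq_sqrt ht0]
    ring
  calc S = Real.sqrt (S ^ 2) := by rw [Real.sqrt_sq hS0]
    _ ≤ Real.sqrt (R ^ 2) := Real.sqrt_le_sqrt hsq
    _ = R := Real.sqrt_sq hR0

end cnting


theorem stmt8 (m n : ℕ) (hm : 1 ≤ m) (hn : 1 ≤ n) (hdvd : m ∣ n)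
    (μ : Measure (Fin n → ℝ)) [IsProbabilityMeasure μ]
    (hexch : ∀ σ : Equiv.Perm (Fin n), μ.map (fun x => x ∘ ⇑σ) = μ)
    (hint : Integrable (fun x : Fin n → ℝ => ∑ j, |x j|) μ)
    (L : ℝ) (hL : 0 ≤ L) (q : (Fin m → ℝ) → ℝ)
    (hq : ∀ y z : Fin m → ℝ, |q y - q z| ≤ L * ∑ i, |y i - z i|) :
    |((m : ℝ) ^ n)⁻¹ * (∑ f : Fin n → Fin m, ∫ x, q (binOp f x) ∂μ)
        - ∫ x, q (binOp (dmap m n hn hdvd) x) ∂μ|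
      ≤ 2 * L * Real.sqrt ((m : ℝ) ^ 2 * ((m : ℝ) - 1) / (n : ℝ)) *
          ∫ x, (∑ j, |x j|) ∂μ := by
  have hn0 : 0 < n := hn
  have hm0 : (0 : ℝ) < (m : ℝ) := by exact_mod_cast hm
  have hn0R : (0 : ℝ) < (n : ℝ) := by exact_mod_cast hn
  have hm1R : (1 : ℝ) ≤ (m : ℝ) := by exact_mod_cast hm
  set dd : Fin n → Fin m := dmap m n hn hdvd with hdd
  set j0 : Fin n := ⟨0, hn0⟩ with hj0
  set J : ℝ := ∫ x, |x j0| ∂μ with hJ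
  set I : ℝ := ∫ x, (∑ j, |x j|) ∂μ with hI
  have hIJ : I = n * J := integral_sum_coords μ hexch hint j0
  have hJ0 : 0 ≤ J := integral_nonneg fun x => abs_nonneg _
  set A : (Fin n → Fin m) → ℝ := fun f => ∫ x, q (binOp f x) ∂μ with hA
  have key : ∀ f : Fin n → Fin m,
      |A f - A dd| ≤ 2 * L * ((m : ℝ) * ∑ k : Fin m, |(cnt f k : ℝ) - (n : ℝ) / m|) * J := by
    intro f
    have hmono : Monotone (f ∘ ⇑(Tuple.sort f)) := Tuple.monotone_sort f
    have hdm : Monotone dd := dmap_monotone hn0 hdvd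
    have hAg : A (f ∘ ⇑(Tuple.sort f)) = A f :=
      integral_q_comp_perm μ hexch hL hq f (Tuple.sort f)
    have pair := integral_pair_bound μ hexch hint hL hq (f ∘ ⇑(Tuple.sort f)) dd j0
    have hcardZ := mono_disagree_bound hmono hdm
    simp_rw [cnt_comp_perm f (Tuple.sort f), hdd, cnt_dmap hn0 hdvd] at hcardZ
    have hcardR : (((Finset.univ.filter
          fun j => (f ∘ ⇑(Tuple.sort f)) j ≠ dd j).card : ℝ))
        ≤ (m : ℝ) * ∑ k : Fin m, |(cnt f k : ℝ) - (n : ℝ) / m| := by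
      have hcast : (((Finset.univ.filter
            fun j => (f ∘ ⇑(Tuple.sort f)) j ≠ dd j).card : ℝ))
          ≤ (m : ℝ) * ∑ k : Fin m, |(cnt f k : ℝ) - ((n / m : ℕ) : ℝ)| := by
        exact_mod_cast hcardZ
      rwa [Nat.cast_div hdvd (by positivity : (m : ℝ) ≠ 0)] at hcast
    calc |A f - A dd| = |A (f ∘ ⇑(Tuple.sort f)) - A dd| := by rw [hAg]
      _ ≤ 2 * L * (((Finset.univ.filter
            fun j => (f ∘ ⇑(Tuple.sort f)) j ≠ dd j).card : ℝ)) * J := pair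
      _ ≤ 2 * L * ((m : ℝ) * ∑ k : Fin m, |(cnt f k : ℝ) - (n : ℝ) / m|) * J := by
          have h2L : (0 : ℝ) ≤ 2 * L := by linarith
          exact mul_le_mul_of_nonneg_right (mul_le_mul_of_nonneg_left hcardR h2L) hJ0
  have hcardF : (((Finset.univ : Finset (Fin n → Fin m)).card : ℝ)) = (m : ℝ) ^ n := by
    rw [Finset.card_univ, Fintype.card_fun]
    push_cast
    simp
  have hsplit : ((m : ℝ) ^ n)⁻¹ * (∑ f : Fin n → Fin m, A f) - A dd
      = ((m : ℝ) ^ n)⁻¹ * (∑ f : Fin n → Fin m, (A f - A dd)) := by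
    rw [Finset.sum_sub_distrib, Finset.sum_const, nsmul_eq_mul, hcardF]
    have hpn : ((m : ℝ) ^ n) ≠ 0 := by positivity
    field_simp
  have havg : |((m : ℝ) ^ n)⁻¹ * (∑ f : Fin n → Fin m, A f) - A dd|
      ≤ ((m : ℝ) ^ n)⁻¹ * ∑ f : Fin n → Fin m, |A f - A dd| := by
    rw [hsplit, abs_mul, abs_of_nonneg (by positivity : (0 : ℝ) ≤ ((m : ℝ) ^ n)⁻¹)]
    exact mul_le_mul_of_nonneg_left (Finset.abs_sum_le_sum_abs _ _) (by positivity)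
  have hsum : ∑ f : Fin n → Fin m, |A f - A dd|
      ≤ 2 * L * J * (m : ℝ) * ((m : ℝ) ^ n * Real.sqrt ((n : ℝ) * ((m : ℝ) - 1))) := by
    calc ∑ f : Fin n → Fin m, |A f - A dd|
        ≤ ∑ f : Fin n → Fin m,
            2 * L * ((m : ℝ) * ∑ k : Fin m, |(cnt f k : ℝ) - (n : ℝ) / m|) * J :=
          Finset.sum_le_sum fun f _ => key f
      _ = ∑ f : Fin n → Fin m, ∑ k : Fin m,
            2 * L * J * (m : ℝ) * |(cnt f k : ℝ) - (n : ℝ) / m| := by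
          refine Finset.sum_congr rfl fun f _ => ?_
          rw [show 2 * L * ((m : ℝ) * ∑ k : Fin m, |(cnt f k : ℝ) - (n : ℝ) / m|) * J
              = 2 * L * J * (m : ℝ) * ∑ k : Fin m, |(cnt f k : ℝ) - (n : ℝ) / m| from by ring,
            Finset.mul_sum]
      _ = ∑ k : Fin m, ∑ f : Fin n → Fin m,
            2 * L * J * (m : ℝ) * |(cnt f k : ℝ) - (n : ℝ) / m| := Finset.sum_comm
      _ = 2 * L * J * (m : ℝ) *
            ∑ k : Fin m, ∑ f : Fin n → Fin m, |(cnt f k : ℝ) - (n : ℝ) / m| := by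
          simp_rw [← Finset.mul_sum]
      _ ≤ 2 * L * J * (m : ℝ) *
            ∑ _k : Fin m, ((m : ℝ) ^ n * Real.sqrt ((n : ℝ) * ((m : ℝ) - 1)) / m) := by
          have h0 : (0 : ℝ) ≤ 2 * L * J * (m : ℝ) := by positivity
          refine mul_le_mul_of_nonneg_left
            (Finset.sum_le_sum fun k _ => sum_abs_dev hm hn hdvd k) h0
      _ = 2 * L * J * (m : ℝ) * ((m : ℝ) ^ n * Real.sqrt ((n : ℝ) * ((m : ℝ) - 1))) := by
          rw [Finset.sum_const, Finset.card_univ, Fintype.card_fin, nsmul_eq_mul]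
          field_simp
  have hfinal : ((m : ℝ) ^ n)⁻¹ *
        (2 * L * J * (m : ℝ) * ((m : ℝ) ^ n * Real.sqrt ((n : ℝ) * ((m : ℝ) - 1))))
      = 2 * L * Real.sqrt ((m : ℝ) ^ 2 * ((m : ℝ) - 1) / (n : ℝ)) * I := by
    rw [hIJ]
    have hpn : ((m : ℝ) ^ n) ≠ 0 := by positivity
    have hsqrt : (m : ℝ) * Real.sqrt ((n : ℝ) * ((m : ℝ) - 1))
        = (n : ℝ) * Real.sqrt ((m : ℝ) ^ 2 * ((m : ℝ) - 1) / (n : ℝ)) := by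
      rw [show (m : ℝ) = Real.sqrt ((m : ℝ) ^ 2) by rw [Real.sqrt_sq hm0.le],
        show (n : ℝ) = Real.sqrt ((n : ℝ) ^ 2) by rw [Real.sqrt_sq hn0R.le]]
      rw [← Real.sqrt_mul (by positivity), ← Real.sqrt_mul (by positivity)]
      congr 1
      simp only [Real.sqrt_sq hm0.le, Real.sqrt_sq hn0R.le]
      field_simp
    calc ((m : ℝ) ^ n)⁻¹ *
          (2 * L * J * (m : ℝ) * ((m : ℝ) ^ n * Real.sqrt ((n : ℝ) * ((m : ℝ) - 1))))
        = ((m : ℝ) * Real.sqrt ((n : ℝ) * ((m : ℝ) - 1))) * (2 * L * J)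
            * (((m : ℝ) ^ n)⁻¹ * (m : ℝ) ^ n) := by ring
      _ = ((m : ℝ) * Real.sqrt ((n : ℝ) * ((m : ℝ) - 1))) * (2 * L * J) := by
          rw [inv_mul_cancel₀ hpn, mul_one]
      _ = ((n : ℝ) * Real.sqrt ((m : ℝ) ^ 2 * ((m : ℝ) - 1) / (n : ℝ))) * (2 * L * J) := by
          rw [hsqrt]
      _ = 2 * L * Real.sqrt ((m : ℝ) ^ 2 * ((m : ℝ) - 1) / (n : ℝ)) * ((n : ℝ) * J) := by
          ring
  calc |((m : ℝ) ^ n)⁻¹ * (∑ f : Fin n → Fin m, ∫ x, q (binOp f x) ∂μ)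
        - ∫ x, q (binOp (dmap m n hn hdvd) x) ∂μ|
      = |((m : ℝ) ^ n)⁻¹ * (∑ f : Fin n → Fin m, A f) - A dd| := rfl
    _ ≤ ((m : ℝ) ^ n)⁻¹ * ∑ f : Fin n → Fin m, |A f - A dd| := havg
    _ ≤ ((m : ℝ) ^ n)⁻¹ *
          (2 * L * J * (m : ℝ) * ((m : ℝ) ^ n * Real.sqrt ((n : ℝ) * ((m : ℝ) - 1)))) := by
        exact mul_le_mul_of_nonneg_left hsum (by positivity)
    _ = 2 * L * Real.sqrt ((m : ℝ) ^ 2 * ((m : ℝ) - 1) / (n : ℝ)) * I := hfinal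
end

section
/- Let E be a nonempty type, let k ≥ 1, and let q : (Fin k → E) → ℝ satisfy |q(z)| ≤ M for all z and some M ≥ 0. For n ≥ 1 define u_n = inf_{x : Fin n → E} n^(−k) · ∑_{f : Fin k → Fin n} q(x ∘ f), and for n ≥ k define ℓ_n = inf_{x : Fin n → E} sym_n q(x). Then: (i) ℓ_n ≤ ℓ_{n+1} for all n ≥ k; (ii) ℓ_n ≤ u_N for all n ≥ k and all N ≥ 1; (iii) 0 ≤ u_n − ℓ_n ≤ k(k−1)·M/n for all n ≥ k; and (iv) sup_{n ≥ k} ℓ_n = inf_{n ≥ 1} u_n. -/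
/-- The symmetrization `sym_n q (x) = ((n−k)!/n!) ∑_{φ : Fin k ↪ Fin n} q (x ∘ φ)`. -/
noncomputable def symN {E : Type*} (k n : ℕ) (q : (Fin k → E) → ℝ) (x : Fin n → E) : ℝ :=
  (Nat.factorial (n - k) : ℝ) / (Nat.factorial n : ℝ) *
    ∑ φ ∈ Finset.univ.filter (fun φ : Fin k → Fin n => Function.Injective φ), q (x ∘ φ)

open Finset Function

lemma factor_perm {k n : ℕ} (hkn : k ≤ n) {φ : Fin k → Fin n} (hφ : Injective φ) :
    ∃ σ : Equiv.Perm (Fin n), φ = σ ∘ Fin.castLE hkn := by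
  classical
  have hc : Injective (Fin.castLE hkn) := Fin.castLE_injective hkn
  let e : {x : Fin n // x ∈ Set.range (Fin.castLE hkn)} ≃ {x : Fin n // x ∈ Set.range φ} :=
    (Equiv.ofInjective _ hc).symm.trans (Equiv.ofInjective _ hφ)
  refine ⟨e.extendSubtype, funext fun i => ?_⟩
  have hx : (Fin.castLE hkn i) ∈ Set.range (Fin.castLE hkn) := ⟨i, rfl⟩
  rw [comp_apply, e.extendSubtype_apply_of_mem _ hx]
  show φ _ = _
  congr 1
  have : (Equiv.ofInjective _ hc) i = ⟨Fin.castLE hkn i, hx⟩ := rfl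
  rw [← this, Equiv.symm_apply_apply]

-- reindex by permutation of the domain, over injective functions
lemma sum_inj_comp_perm {n m : ℕ} (σ : Equiv.Perm (Fin n)) (F : (Fin n → Fin m) → ℝ) :
    ∑ ψ ∈ Finset.univ.filter (fun ψ : Fin n → Fin m => Injective ψ), F (ψ ∘ σ)
      = ∑ ψ ∈ Finset.univ.filter (fun ψ : Fin n → Fin m => Injective ψ), F ψ := by
  refine Finset.sum_nbij' (i := fun ψ => ψ ∘ σ) (j := fun ψ => ψ ∘ σ.symm) ?_ ?_ ?_ ?_ ?_ <;>
    intro ψ hψ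
  · simp only [Finset.mem_filter, Finset.mem_univ, true_and] at hψ ⊢
    exact hψ.comp σ.injective
  · simp only [Finset.mem_filter, Finset.mem_univ, true_and] at hψ ⊢
    exact hψ.comp σ.symm.injective
  · funext i; simp
  · funext i; simp
  · rfl

-- reindex by permutation of the domain, over all functions
lemma sum_all_comp_perm {n m : ℕ} (σ : Equiv.Perm (Fin n)) (F : (Fin n → Fin m) → ℝ) :
    ∑ ψ : Fin n → Fin m, F (ψ ∘ σ) = ∑ ψ : Fin n → Fin m, F ψ :=
  Fintype.sum_bijective (fun ψ => ψ ∘ σ)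
    (Function.Bijective.comp_right σ.bijective) _ _ (fun _ => rfl)

-- splitting sum over all functions along restriction to first k coordinates
lemma sum_all_restrict {k n N : ℕ} (hkn : k ≤ n) (F : (Fin k → Fin N) → ℝ) :
    ∑ J : Fin n → Fin N, F (J ∘ Fin.castLE hkn)
      = (N ^ (n - k) : ℕ) * ∑ g : Fin k → Fin N, F g := by
  classical
  have hbij : Function.Bijective
      (fun p : (Fin k → Fin N) × (Fin (n - k) → Fin N) =>
        (fun j : Fin n => if h : (j : ℕ) < k then p.1 ⟨j, h⟩
          else p.2 ⟨(j : ℕ) - k, by omega⟩ : Fin n → Fin N)) := by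
    rw [Fintype.bijective_iff_injective_and_card]
    constructor
    · rintro ⟨a, b⟩ ⟨a', b'⟩ h
      simp only [Prod.mk.injEq]
      constructor
      · funext i
        have := congrFun h ⟨i, lt_of_lt_of_le i.2 hkn⟩
        simpa using this
      · funext i
        have hik : ¬ ((k + (i : ℕ)) < k) := by omega
        have := congrFun h ⟨k + i, by omega⟩
        simp only [hik, dif_neg, not_false_iff] at this
        simpa using this
    · simp [← pow_add, Nat.add_sub_cancel' hkn]
  rw [← Fintype.sum_bijective _ hbij
      (fun p => F ((fun j : Fin n => if h : (j : ℕ) < k then p.1 ⟨j, h⟩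
          else p.2 ⟨(j : ℕ) - k, by omega⟩) ∘ Fin.castLE hkn)) (fun J => F (J ∘ Fin.castLE hkn))
      (fun p => rfl)]
  have : ∀ p : (Fin k → Fin N) × (Fin (n - k) → Fin N),
      ((fun j : Fin n => if h : (j : ℕ) < k then p.1 ⟨j, h⟩
          else p.2 ⟨(j : ℕ) - k, by omega⟩) ∘ Fin.castLE hkn) = p.1 := by
    intro p; funext i; simp [Fin.castLE]
  simp_rw [this]
  rw [Fintype.sum_prod_type_right]
  simp [Finset.card_univ, mul_comm]

lemma sum_inj_restrict {k n m : ℕ} (hkn : k ≤ n) (hnm : n ≤ m) :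
    ∃ D : ℕ, 0 < D ∧ ∀ F : (Fin k → Fin m) → ℝ,
      ∑ ψ ∈ Finset.univ.filter (fun ψ : Fin n → Fin m => Injective ψ), F (ψ ∘ Fin.castLE hkn)
        = D * ∑ χ ∈ Finset.univ.filter (fun χ : Fin k → Fin m => Injective χ), F χ := by
  classical
  have hkm : k ≤ m := hkn.trans hnm
  have hcomp : Fin.castLE hnm ∘ Fin.castLE hkn = Fin.castLE hkm := rfl
  set s := Finset.univ.filter (fun ψ : Fin n → Fin m => Injective ψ) with hs
  set t := Finset.univ.filter (fun χ : Fin k → Fin m => Injective χ) with ht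
  set D := #{ψ ∈ s | ψ ∘ Fin.castLE hkn = Fin.castLE hkm} with hD
  have hDpos : 0 < D := by
    rw [hD]
    apply Finset.card_pos.2
    exact ⟨Fin.castLE hnm, by
      simp only [Finset.mem_filter, Finset.mem_univ, true_and, hs]
      exact ⟨Fin.castLE_injective hnm, hcomp⟩⟩
  -- fibers all have card D
  have hfib : ∀ χ ∈ t, #{ψ ∈ s | ψ ∘ Fin.castLE hkn = χ} = D := by
    intro χ hχ
    rw [ht, Finset.mem_filter] at hχ
    obtain ⟨σ, hσ⟩ := factor_perm hkm hχ.2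
    rw [hD]
    apply Finset.card_bij' (i := fun ψ _ => σ.symm ∘ ψ) (j := fun ψ _ => σ ∘ ψ)
    · intro ψ hψ
      rw [Finset.mem_filter] at hψ ⊢
      rcases hψ with ⟨hψs, hψf⟩
      rw [hs, Finset.mem_filter] at hψs
      refine ⟨by rw [hs, Finset.mem_filter]; exact ⟨Finset.mem_univ _, σ.symm.injective.comp hψs.2⟩, ?_⟩
      rw [comp_assoc, hψf, hσ]
      funext i; simp
    · intro ψ hψ
      rw [Finset.mem_filter] at hψ ⊢
      rcases hψ with ⟨hψs, hψf⟩
      rw [hs, Finset.mem_filter] at hψs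
      refine ⟨by rw [hs, Finset.mem_filter]; exact ⟨Finset.mem_univ _, σ.injective.comp hψs.2⟩, ?_⟩
      rw [comp_assoc, hψf, ← hσ]
    · intro ψ _; funext i; simp
    · intro ψ _; funext i; simp
  -- image of restriction is t
  have himg : s.image (· ∘ Fin.castLE hkn) = t := by
    apply Finset.Subset.antisymm
    · intro χ hχ
      rw [Finset.mem_image] at hχ
      obtain ⟨ψ, hψ, rfl⟩ := hχ
      rw [hs, Finset.mem_filter] at hψ
      rw [ht, Finset.mem_filter]
      exact ⟨Finset.mem_univ _, hψ.2.comp (Fin.castLE_injective hkn)⟩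
    · intro χ hχ
      rw [ht, Finset.mem_filter] at hχ
      obtain ⟨σ, hσ⟩ := factor_perm hkm hχ.2
      rw [Finset.mem_image]
      refine ⟨σ ∘ Fin.castLE hnm, ?_, ?_⟩
      · rw [hs, Finset.mem_filter]
        exact ⟨Finset.mem_univ _, σ.injective.comp (Fin.castLE_injective hnm)⟩
      · rw [comp_assoc, hcomp, ← hσ]
  refine ⟨D, hDpos, fun F => ?_⟩
  rw [Finset.sum_comp F (· ∘ Fin.castLE hkn), himg]
  rw [Finset.sum_congr rfl (fun χ hχ => by rw [hfib χ hχ])]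
  rw [← Finset.smul_sum, nsmul_eq_mul]

lemma cardInj (k n : ℕ) :
    #(Finset.univ.filter (fun φ : Fin k → Fin n => Injective φ)) = n.descFactorial k := by
  classical
  rw [← Fintype.card_subtype]
  rw [Fintype.card_congr (Equiv.subtypeInjectiveEquivEmbedding (Fin k) (Fin n))]
  simp [Fintype.card_embedding_eq]

lemma coeff_card {k n : ℕ} (hkn : k ≤ n) :
    ((Nat.factorial (n - k) : ℝ) / (Nat.factorial n : ℝ)) *
      (#(Finset.univ.filter (fun φ : Fin k → Fin n => Injective φ)) : ℝ) = 1 := by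
  rw [cardInj, div_mul_eq_mul_div]
  rw [div_eq_one_iff_eq (by exact_mod_cast (Nat.factorial_pos n).ne')]
  exact_mod_cast Nat.factorial_mul_descFactorial hkn

/-- Identity for `u`: summing the symmetrization over all selections equals the plain mean. -/
lemma symN_sum_all {E : Type*} {k n N : ℕ} (hkn : k ≤ n) (q : (Fin k → E) → ℝ) (x : Fin N → E) :
    ∑ J : Fin n → Fin N, symN k n q (x ∘ J)
      = (N ^ (n - k) : ℕ) * ∑ g : Fin k → Fin N, q (x ∘ g) := by
  classical
  simp only [symN]
  rw [← Finset.mul_sum, Finset.sum_comm]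
  have inner : ∀ φ ∈ Finset.univ.filter (fun φ : Fin k → Fin n => Injective φ),
      ∑ J : Fin n → Fin N, q ((x ∘ J) ∘ φ)
        = (N ^ (n - k) : ℕ) * ∑ g : Fin k → Fin N, q (x ∘ g) := by
    intro φ hφ
    rw [Finset.mem_filter] at hφ
    obtain ⟨σ, hσ⟩ := factor_perm hkn hφ.2
    have h1 : ∀ J : Fin n → Fin N, ((x ∘ J) ∘ φ) = (x ∘ ((J ∘ σ) ∘ Fin.castLE hkn)) := by
      intro J; rw [hσ]; rfl
    simp_rw [h1]
    rw [sum_all_comp_perm σ (fun J => q (x ∘ (J ∘ Fin.castLE hkn)))]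
    exact sum_all_restrict hkn (fun g => q (x ∘ g))
  rw [Finset.sum_congr rfl inner, Finset.sum_const, nsmul_eq_mul]
  linear_combination ((N ^ (n - k) : ℕ) * ∑ g : Fin k → Fin N, q (x ∘ g)) * coeff_card hkn

/-- Identity for monotonicity: summing `symN k n` over injective selections from `Fin m`. -/
lemma symN_sum_inj {E : Type*} {k n m : ℕ} (hkn : k ≤ n) (hnm : n ≤ m)
    (q : (Fin k → E) → ℝ) (x : Fin m → E) :
    ∑ ψ ∈ Finset.univ.filter (fun ψ : Fin n → Fin m => Injective ψ), symN k n q (x ∘ ψ)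
      = (#(Finset.univ.filter (fun ψ : Fin n → Fin m => Injective ψ)) : ℝ) * symN k m q x := by
  classical
  have hkm : k ≤ m := hkn.trans hnm
  obtain ⟨D, hDpos, hsum⟩ := sum_inj_restrict hkn hnm
  have hcard : (#(Finset.univ.filter (fun ψ : Fin n → Fin m => Injective ψ)) : ℝ)
      = (D : ℝ) * (#(Finset.univ.filter (fun χ : Fin k → Fin m => Injective χ)) : ℝ) := by
    have := hsum (fun _ => (1 : ℝ))
    simpa using this
  simp only [symN]
  rw [← Finset.mul_sum, Finset.sum_comm]
  have inner : ∀ φ ∈ Finset.univ.filter (fun φ : Fin k → Fin n => Injective φ),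
      ∑ ψ ∈ Finset.univ.filter (fun ψ : Fin n → Fin m => Injective ψ), q ((x ∘ ψ) ∘ φ)
        = (D : ℝ) * ∑ χ ∈ Finset.univ.filter (fun χ : Fin k → Fin m => Injective χ),
            q (x ∘ χ) := by
    intro φ hφ
    rw [Finset.mem_filter] at hφ
    obtain ⟨σ, hσ⟩ := factor_perm hkn hφ.2
    have h1 : ∀ ψ : Fin n → Fin m, ((x ∘ ψ) ∘ φ) = (x ∘ ((ψ ∘ σ) ∘ Fin.castLE hkn)) := by
      intro ψ; rw [hσ]; rfl
    simp_rw [h1]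
    rw [sum_inj_comp_perm σ (fun ψ => q (x ∘ (ψ ∘ Fin.castLE hkn)))]
    exact hsum (fun χ => q (x ∘ χ))
  rw [Finset.sum_congr rfl inner, Finset.sum_const, nsmul_eq_mul]
  have h1 := coeff_card hkn
  have h2 := coeff_card hkm
  set S := ∑ χ ∈ Finset.univ.filter (fun χ : Fin k → Fin m => Injective χ), q (x ∘ χ) with hS
  linear_combination ((D : ℝ) * S) * h1 - ((D : ℝ) * S) * h2
    - ((Nat.factorial (m - k) : ℝ) / (Nat.factorial m : ℝ) * S) * hcard

lemma abs_symN_le {E : Type*} {k n : ℕ} (hkn : k ≤ n) {M : ℝ}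
    (q : (Fin k → E) → ℝ) (hq : ∀ z, |q z| ≤ M) (x : Fin n → E) :
    |symN k n q x| ≤ M := by
  classical
  have hc : (0:ℝ) ≤ (Nat.factorial (n - k) : ℝ) / (Nat.factorial n : ℝ) := by positivity
  rw [symN, abs_mul, abs_of_nonneg hc]
  have habs : |∑ φ ∈ Finset.univ.filter (fun φ : Fin k → Fin n => Injective φ), q (x ∘ φ)|
      ≤ (#(Finset.univ.filter (fun φ : Fin k → Fin n => Injective φ)) : ℝ) * M := by
    refine (Finset.abs_sum_le_sum_abs _ _).trans ?_
    rw [← nsmul_eq_mul]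
    exact Finset.sum_le_card_nsmul _ _ M (fun f _ => hq _)
  calc (Nat.factorial (n - k) : ℝ) / (Nat.factorial n : ℝ) * |_| 
      ≤ (Nat.factorial (n - k) : ℝ) / (Nat.factorial n : ℝ) *
        ((#(Finset.univ.filter (fun φ : Fin k → Fin n => Injective φ)) : ℝ) * M) :=
        mul_le_mul_of_nonneg_left habs hc
    _ = M := by rw [← mul_assoc, coeff_card hkn, one_mul]

lemma desc_ineq (n : ℕ) : ∀ j : ℕ, j ≤ n →
    2 * ((n:ℝ)^j - (n.descFactorial j : ℝ)) * n ≤ (j : ℝ) * ((j:ℝ) - 1) * (n:ℝ)^j := by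
  intro j
  induction j with
  | zero => intro _; simp
  | succ j ih =>
    intro hjn
    have hj : j ≤ n := Nat.le_of_succ_le hjn
    have IH := ih hj
    have key : (n.descFactorial (j+1) : ℝ) = ((n:ℝ) - j) * (n.descFactorial j : ℝ) := by
      rw [Nat.descFactorial_succ]
      push_cast [Nat.cast_sub hj]
      ring
    have hdF : (n.descFactorial j : ℝ) ≤ (n:ℝ)^j := by
      exact_mod_cast Nat.descFactorial_le_pow n j
    have hn0 : (0:ℝ) ≤ (n:ℝ) := Nat.cast_nonneg n
    have hj0 : (0:ℝ) ≤ (j:ℝ) := Nat.cast_nonneg j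
    rw [key]
    push_cast
    simp only [pow_succ]
    nlinarith [mul_le_mul_of_nonneg_left IH hn0,
      mul_le_mul_of_nonneg_right (mul_le_mul_of_nonneg_left hdF hj0) hn0,
      pow_nonneg hn0 j]

lemma mean_le_symN_add {E : Type*} {k n : ℕ} (hk : 1 ≤ k) (hkn : k ≤ n) {M : ℝ} (hM : 0 ≤ M)
    (q : (Fin k → E) → ℝ) (hq : ∀ z, |q z| ≤ M) (x : Fin n → E) :
    ((n:ℝ)^k)⁻¹ * ∑ f : Fin k → Fin n, q (x ∘ f)
      ≤ symN k n q x + (k:ℝ) * ((k:ℝ) - 1) * M / (n:ℝ) := by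
  classical
  have hn1 : 1 ≤ n := hk.trans hkn
  have hnR : (0:ℝ) < n := by exact_mod_cast hn1
  have hpk : (0:ℝ) < (n:ℝ)^k := pow_pos hnR k
  set t := Finset.univ.filter (fun φ : Fin k → Fin n => Injective φ) with ht
  set c := (Nat.factorial (n - k) : ℝ) / (Nat.factorial n : ℝ) with hc
  set p := ((n:ℝ)^k)⁻¹ with hp
  set A := ∑ f ∈ t, q (x ∘ f) with hA
  set B := ∑ f ∈ Finset.univ.filter (fun φ : Fin k → Fin n => ¬ Injective φ), q (x ∘ f) with hB
  have hsplit : ∑ f : Fin k → Fin n, q (x ∘ f) = A + B :=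
    (Finset.sum_filter_add_sum_filter_not Finset.univ _ _).symm
  have hcard : (#t : ℝ) = (n.descFactorial k : ℝ) := by exact_mod_cast cardInj k n
  have hcD : c * (#t : ℝ) = 1 := coeff_card hkn
  have hDle : (#t : ℝ) ≤ (n:ℝ)^k := by
    rw [hcard]; exact_mod_cast Nat.descFactorial_le_pow n k
  have hDpos : (0:ℝ) < (#t : ℝ) := by
    rw [hcard]
    have : n.descFactorial k ≠ 0 := by
      intro h
      exact absurd (Nat.descFactorial_eq_zero_iff_lt.mp h) (not_lt.mpr hkn)
    exact_mod_cast Nat.pos_of_ne_zero this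
  have hcuniv : (#(Finset.univ : Finset (Fin k → Fin n)) : ℝ) = (n:ℝ)^k := by
    rw [Finset.card_univ]
    simp [Fintype.card_fun]
  have hcardB : (#(Finset.univ.filter (fun φ : Fin k → Fin n => ¬ Injective φ)) : ℝ)
      = (n:ℝ)^k - (#t : ℝ) := by
    have := Finset.card_filter_add_card_filter_not
      (s := (Finset.univ : Finset (Fin k → Fin n)))
      (p := fun φ : Fin k → Fin n => Injective φ)
    have h2 : ((#t + #(Finset.univ.filter (fun φ : Fin k → Fin n => ¬ Injective φ)) : ℕ) : ℝ)
        = (n:ℝ)^k := by rw [this]; exact hcuniv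
    push_cast at h2
    linarith
  have habsA : |A| ≤ (#t : ℝ) * M := by
    refine (Finset.abs_sum_le_sum_abs _ _).trans ?_
    rw [← nsmul_eq_mul]
    exact Finset.sum_le_card_nsmul _ _ M (fun f _ => hq _)
  have habsB : |B| ≤ ((n:ℝ)^k - (#t : ℝ)) * M := by
    refine (Finset.abs_sum_le_sum_abs _ _).trans ?_
    rw [← hcardB, ← nsmul_eq_mul]
    exact Finset.sum_le_card_nsmul _ _ M (fun f _ => hq _)
  obtain ⟨hAlow, hAhigh⟩ := abs_le.mp habsA
  obtain ⟨hBlow, hBhigh⟩ := abs_le.mp habsB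
  have hsym : symN k n q x = c * A := rfl
  have hpp : (0:ℝ) < p := by rw [hp]; positivity
  have hpInv : p * (n:ℝ)^k = 1 := inv_mul_cancel₀ hpk.ne'
  have hpc : p ≤ c := by
    rw [← mul_le_mul_iff_left₀ hDpos]
    calc p * (#t : ℝ) ≤ p * (n:ℝ)^k := mul_le_mul_of_nonneg_left hDle hpp.le
      _ = 1 := hpInv
      _ = c * (#t : ℝ) := hcD.symm
  -- main gap estimate
  have hgap : p * (A + B) - c * A ≤ 2 * p * ((n:ℝ)^k - (#t : ℝ)) * M := by
    have h1 : (p - c) * A ≤ (c - p) * ((#t : ℝ) * M) := by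
      nlinarith [mul_le_mul_of_nonneg_left hAlow (sub_nonneg.mpr hpc)]
    have h2 : p * B ≤ p * (((n:ℝ)^k - (#t : ℝ)) * M) := mul_le_mul_of_nonneg_left hBhigh hpp.le
    have h3 : (c - p) * ((#t : ℝ) * M) = (1 - p * (#t : ℝ)) * M := by
      rw [← hcD]; ring
    have h4 : (1 - p * (#t : ℝ)) * M = p * (((n:ℝ)^k - (#t : ℝ)) * M) := by
      rw [← hpInv]; ring
    nlinarith [h1, h2, h3, h4]
  -- descFactorial inequality
  have hdesc : 2 * ((n:ℝ)^k - (#t : ℝ)) * (n:ℝ) ≤ (k:ℝ) * ((k:ℝ) - 1) * (n:ℝ)^k := by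
    rw [hcard]; exact desc_ineq n k hkn
  have hfin : 2 * p * ((n:ℝ)^k - (#t : ℝ)) * M ≤ (k:ℝ) * ((k:ℝ) - 1) * M / (n:ℝ) := by
    rw [le_div_iff₀ hnR]
    have := mul_le_mul_of_nonneg_right hdesc hM
    have h5 := mul_le_mul_of_nonneg_left this hpp.le
    calc 2 * p * ((n:ℝ)^k - (#t : ℝ)) * M * (n:ℝ)
        = p * (2 * ((n:ℝ)^k - (#t : ℝ)) * (n:ℝ) * M) := by ring
      _ ≤ p * ((k:ℝ) * ((k:ℝ) - 1) * (n:ℝ)^k * M) := h5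
      _ = (p * (n:ℝ)^k) * ((k:ℝ) * ((k:ℝ) - 1) * M) := by ring
      _ = (k:ℝ) * ((k:ℝ) - 1) * M := by rw [hpInv, one_mul]
  rw [hsplit, hsym]
  linarith [hgap, hfin]

lemma abs_mean_le {E : Type*} {k N : ℕ} (hN : 1 ≤ N) {M : ℝ}
    (q : (Fin k → E) → ℝ) (hq : ∀ z, |q z| ≤ M) (x : Fin N → E) :
    |((N:ℝ)^k)⁻¹ * ∑ f : Fin k → Fin N, q (x ∘ f)| ≤ M := by
  have hNR : (0:ℝ) < N := by exact_mod_cast hN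
  have hpk : (0:ℝ) < (N:ℝ)^k := pow_pos hNR k
  rw [abs_mul, abs_of_nonneg (inv_nonneg.mpr hpk.le)]
  have habs : |∑ f : Fin k → Fin N, q (x ∘ f)| ≤ (N:ℝ)^k * M := by
    refine (Finset.abs_sum_le_sum_abs _ _).trans ?_
    have h := Finset.sum_le_card_nsmul Finset.univ (fun f : Fin k → Fin N => |q (x ∘ f)|) M
      (fun f _ => hq _)
    rw [Finset.card_univ] at h
    have hcard : (Fintype.card (Fin k → Fin N) : ℝ) = (N:ℝ)^k := by
      simp [Fintype.card_fun]
    calc ∑ f : Fin k → Fin N, |q (x ∘ f)| ≤ (Fintype.card (Fin k → Fin N)) • M := h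
      _ = (N:ℝ)^k * M := by rw [nsmul_eq_mul, hcard]
  calc ((N:ℝ)^k)⁻¹ * |∑ f : Fin k → Fin N, q (x ∘ f)|
      ≤ ((N:ℝ)^k)⁻¹ * ((N:ℝ)^k * M) := mul_le_mul_of_nonneg_left habs (inv_nonneg.mpr hpk.le)
    _ = M := by field_simp

theorem stmt13 {E : Type*} [Nonempty E] (k : ℕ) (hk : 1 ≤ k) (M : ℝ) (hM : 0 ≤ M)
    (q : (Fin k → E) → ℝ) (hq : ∀ z, |q z| ≤ M)
    (u l : ℕ → ℝ)
    (hu : ∀ n, u n = sInf {r : ℝ | ∃ x : Fin n → E,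
      r = ((n : ℝ) ^ k)⁻¹ * ∑ f : Fin k → Fin n, q (x ∘ f)})
    (hl : ∀ n, l n = sInf {r : ℝ | ∃ x : Fin n → E, r = symN k n q x}) :
    (∀ n, k ≤ n → l n ≤ l (n + 1)) ∧
    (∀ n N, k ≤ n → 1 ≤ N → l n ≤ u N) ∧
    (∀ n, k ≤ n → 0 ≤ u n - l n ∧ u n - l n ≤ (k : ℝ) * ((k : ℝ) - 1) * M / (n : ℝ)) ∧
    (sSup {r : ℝ | ∃ n, k ≤ n ∧ r = l n} = sInf {r : ℝ | ∃ n, 1 ≤ n ∧ r = u n}) := by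
  classical
  set Sl : ℕ → Set ℝ := fun n => {r : ℝ | ∃ x : Fin n → E, r = symN k n q x} with hSl
  set Su : ℕ → Set ℝ := fun n => {r : ℝ | ∃ x : Fin n → E,
    r = ((n : ℝ) ^ k)⁻¹ * ∑ f : Fin k → Fin n, q (x ∘ f)} with hSu
  have hSlne : ∀ n, (Sl n).Nonempty := fun n =>
    ⟨symN k n q (fun _ => Classical.arbitrary E), _, rfl⟩
  have hSune : ∀ n, (Su n).Nonempty := fun n =>
    ⟨_, (fun _ => Classical.arbitrary E), rfl⟩
  have hSlbdd : ∀ n, k ≤ n → ∀ r ∈ Sl n, -M ≤ r := by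
    rintro n hkn r ⟨x, rfl⟩
    exact neg_le_of_abs_le (abs_symN_le hkn q hq x)
  have hSlBddBelow : ∀ n, k ≤ n → BddBelow (Sl n) := fun n hkn => ⟨-M, hSlbdd n hkn⟩
  have hSubdd : ∀ N, 1 ≤ N → ∀ r ∈ Su N, -M ≤ r := by
    rintro N hN r ⟨x, rfl⟩
    exact neg_le_of_abs_le (abs_mean_le hN q hq x)
  have hSuBddBelow : ∀ N, 1 ≤ N → BddBelow (Su N) := fun N hN => ⟨-M, hSubdd N hN⟩
  -- l n is a lower bound for symN values
  have hlle : ∀ n, k ≤ n → ∀ x : Fin n → E, l n ≤ symN k n q x := by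
    intro n hkn x
    rw [hl n]
    exact csInf_le (hSlBddBelow n hkn) ⟨x, rfl⟩
  have hule : ∀ N, ∀ x : Fin N → E, 1 ≤ N →
      u N ≤ ((N : ℝ) ^ k)⁻¹ * ∑ f : Fin k → Fin N, q (x ∘ f) := by
    intro N x hN
    rw [hu N]
    exact csInf_le (hSuBddBelow N hN) ⟨x, rfl⟩
  -- (i) monotonicity
  have claim1 : ∀ n, k ≤ n → l n ≤ l (n + 1) := by
    intro n hkn
    rw [hl (n+1)]
    apply le_csInf (hSlne (n+1))
    rintro r ⟨x, rfl⟩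
    have hid := symN_sum_inj hkn (Nat.le_succ n) q x
    have hCpos : (0:ℝ) < (#(Finset.univ.filter
        (fun ψ : Fin n → Fin (n+1) => Function.Injective ψ)) : ℝ) := by
      rw [cardInj]
      have : (n+1).descFactorial n ≠ 0 := by
        intro h
        exact absurd (Nat.descFactorial_eq_zero_iff_lt.mp h) (by omega)
      exact_mod_cast Nat.pos_of_ne_zero this
    have hlow : (#(Finset.univ.filter
        (fun ψ : Fin n → Fin (n+1) => Function.Injective ψ)) : ℝ) * l n
        ≤ (#(Finset.univ.filter
        (fun ψ : Fin n → Fin (n+1) => Function.Injective ψ)) : ℝ) * symN k (n+1) q x := by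
      rw [← hid, ← nsmul_eq_mul]
      exact Finset.card_nsmul_le_sum _ _ _ (fun ψ _ => hlle n hkn (x ∘ ψ))
    exact le_of_mul_le_mul_left hlow hCpos
  -- (ii)
  have claim2 : ∀ n N, k ≤ n → 1 ≤ N → l n ≤ u N := by
    intro n N hkn hN
    rw [hu N]
    apply le_csInf (hSune N)
    rintro r ⟨x, rfl⟩
    have hid := symN_sum_all (N := N) hkn q x
    have hNR : (0:ℝ) < N := by exact_mod_cast hN
    have hNk : (0:ℝ) < (N:ℝ)^k := pow_pos hNR k
    have hNnk : (0:ℝ) < ((N ^ (n - k) : ℕ) : ℝ) := by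
      positivity
    have hlow : ((N ^ n : ℕ) : ℝ) * l n
        ≤ ((N ^ (n - k) : ℕ) : ℝ) * ∑ g : Fin k → Fin N, q (x ∘ g) := by
      rw [← hid]
      have hcard : (Fintype.card (Fin n → Fin N)) = N ^ n := by simp [Fintype.card_fun]
      calc ((N ^ n : ℕ) : ℝ) * l n = (Fintype.card (Fin n → Fin N)) • l n := by
            rw [nsmul_eq_mul, hcard]
        _ = #(Finset.univ : Finset (Fin n → Fin N)) • l n := by rw [Finset.card_univ]
        _ ≤ ∑ J : Fin n → Fin N, symN k n q (x ∘ J) :=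
            Finset.card_nsmul_le_sum _ _ _ (fun J _ => hlle n hkn (x ∘ J))
    have hpow : ((N ^ n : ℕ) : ℝ) = ((N ^ (n - k) : ℕ) : ℝ) * (N:ℝ)^k := by
      push_cast
      rw [← pow_add]
      congr 1
      omega
    rw [hpow] at hlow
    have hstep : l n * (N:ℝ)^k ≤ ∑ g : Fin k → Fin N, q (x ∘ g) := by
      have := (mul_le_mul_iff_right₀ hNnk).mp (by linarith [hlow] :
        ((N ^ (n - k) : ℕ) : ℝ) * (l n * (N:ℝ)^k)
          ≤ ((N ^ (n - k) : ℕ) : ℝ) * ∑ g : Fin k → Fin N, q (x ∘ g))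
      exact this
    rw [inv_mul_eq_div, le_div_iff₀ hNk]
    exact hstep
  -- (iii)
  have claim3 : ∀ n, k ≤ n → 0 ≤ u n - l n ∧
      u n - l n ≤ (k : ℝ) * ((k : ℝ) - 1) * M / (n : ℝ) := by
    intro n hkn
    have h1 : l n ≤ u n := claim2 n n hkn (hk.trans hkn)
    constructor
    · linarith
    · have h2 : u n - (k : ℝ) * ((k : ℝ) - 1) * M / (n : ℝ) ≤ l n := by
        rw [hl n]
        apply le_csInf (hSlne n)
        rintro r ⟨x, rfl⟩
        have h3 := hule n x (hk.trans hkn)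
        have h4 := mean_le_symN_add hk hkn hM q hq x
        linarith
      linarith
  refine ⟨claim1, claim2, claim3, ?_⟩
  -- (iv)
  set L : Set ℝ := {r : ℝ | ∃ n, k ≤ n ∧ r = l n} with hL
  set U : Set ℝ := {r : ℝ | ∃ n, 1 ≤ n ∧ r = u n} with hU
  have hLne : L.Nonempty := ⟨l k, k, le_refl k, rfl⟩
  have hUne : U.Nonempty := ⟨u 1, 1, le_refl 1, rfl⟩
  have hLbddAbove : BddAbove L := by
    refine ⟨u 1, ?_⟩
    rintro r ⟨n, hkn, rfl⟩
    exact claim2 n 1 hkn (le_refl 1)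
  have hUbddBelow : BddBelow U := by
    refine ⟨-M, ?_⟩
    rintro r ⟨N, hN, rfl⟩
    rw [hu N]
    exact le_csInf (hSune N) (hSubdd N hN)
  apply le_antisymm
  · apply csSup_le hLne
    rintro r ⟨n, hkn, rfl⟩
    apply le_csInf hUne
    rintro r' ⟨N, hN, rfl⟩
    exact claim2 n N hkn hN
  · apply le_of_forall_pos_le_add
    intro ε hε
    obtain ⟨n₀, hn₀⟩ := exists_nat_ge ((k : ℝ) * ((k : ℝ) - 1) * M / ε)
    set n := max k (max 1 n₀) with hn
    have hkn : k ≤ n := le_max_left _ _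
    have h1n : 1 ≤ n := le_trans (le_max_left 1 n₀) (le_max_right _ _)
    have hn₀n : n₀ ≤ n := le_trans (le_max_right 1 n₀) (le_max_right _ _)
    have hnR : (0:ℝ) < n := by exact_mod_cast h1n
    have hCn : (k : ℝ) * ((k : ℝ) - 1) * M / (n : ℝ) ≤ ε := by
      rw [div_le_iff₀ hnR]
      have : (k : ℝ) * ((k : ℝ) - 1) * M / ε ≤ (n : ℝ) := by
        refine hn₀.trans ?_
        exact_mod_cast hn₀n
      calc (k : ℝ) * ((k : ℝ) - 1) * M
          = ((k : ℝ) * ((k : ℝ) - 1) * M / ε) * ε := by field_simp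
        _ ≤ (n : ℝ) * ε := mul_le_mul_of_nonneg_right this hε.le
        _ = ε * (n : ℝ) := mul_comm _ _
    have h5 : sInf U ≤ u n := csInf_le hUbddBelow ⟨n, h1n, rfl⟩
    have h6 := (claim3 n hkn).2
    have h7 : l n ≤ sSup L := le_csSup hLbddAbove ⟨n, hkn, rfl⟩
    linarith
end
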